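/- arXiv:0711.3142 — 3 statements merged into one kernel-verified Lean document; each statement's English description precedes it below -/
import Mathlib

section
/- Let G be a finite group, s ∈ G, and ρ : G^s → ℂˣ a homomorphism. Suppose that for every element σ in the intersection of the conjugacy class of s with the centralizer G^s, writing σ = g s g⁻¹, one has ρ(g⁻¹ s g · σ) = 1 (equivalently ρ(γ_{1,t} γ_{t,1}) = 1 where g_1 = 1). Then for every commuting pair σ_k = g_k s g_k⁻¹, σ_l = g_l s g_l⁻¹ of conjugates of s, one has ρ(γ_{k,l} γ_{l,k}) = 1, where γ_{k,l} = g_l⁻¹ σ_k g_l and γ_{l,k} = g_k⁻¹ σ_l g_k. -/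
/-- If `ρ(γ_{1,t} γ_{t,1}) = 1` for every `σ_t` in `𝒪_s ∩ G^s` (with `g_1 = 1`),
then `ρ(γ_{k,l} γ_{l,k}) = 1` for every commuting pair of conjugates of `s`. -/
theorem stmt2 (G : Type*) [Group G] [Fintype G] (s : G)
    (ρ : Subgroup.centralizer ({s} : Set G) →* ℂˣ)
    (hyp : ∀ g : G, (g * s * g⁻¹) ∈ Subgroup.centralizer ({s} : Set G) →
      ∀ hγ : (g⁻¹ * s * g) * (g * s * g⁻¹) ∈ Subgroup.centralizer ({s} : Set G),
        ρ ⟨(g⁻¹ * s * g) * (g * s * g⁻¹), hγ⟩ = 1) :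
    ∀ gk gl : G,
      (gk * s * gk⁻¹) * (gl * s * gl⁻¹) = (gl * s * gl⁻¹) * (gk * s * gk⁻¹) →
      ∀ hγ : (gl⁻¹ * (gk * s * gk⁻¹) * gl) * (gk⁻¹ * (gl * s * gl⁻¹) * gk) ∈
          Subgroup.centralizer ({s} : Set G),
        ρ ⟨(gl⁻¹ * (gk * s * gk⁻¹) * gl) * (gk⁻¹ * (gl * s * gl⁻¹) * gk), hγ⟩ = 1 := by
  intro gk gl hcomm hγ
  have e : ((gk⁻¹ * gl)⁻¹ * s * (gk⁻¹ * gl)) * ((gk⁻¹ * gl) * s * (gk⁻¹ * gl)⁻¹)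
      = (gl⁻¹ * (gk * s * gk⁻¹) * gl) * (gk⁻¹ * (gl * s * gl⁻¹) * gk) := by
    group
  have h1 : (gk⁻¹ * gl) * s * (gk⁻¹ * gl)⁻¹ ∈ Subgroup.centralizer ({s} : Set G) := by
    rw [Subgroup.mem_centralizer_iff]
    intro x hx
    rw [Set.mem_singleton_iff] at hx; rw [hx]
    have h2 : gk⁻¹ * ((gk * s * gk⁻¹) * (gl * s * gl⁻¹)) * gk
        = gk⁻¹ * ((gl * s * gl⁻¹) * (gk * s * gk⁻¹)) * gk := by rw [hcomm]
    calc s * ((gk⁻¹ * gl) * s * (gk⁻¹ * gl)⁻¹)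
        = gk⁻¹ * ((gk * s * gk⁻¹) * (gl * s * gl⁻¹)) * gk := by group
      _ = gk⁻¹ * ((gl * s * gl⁻¹) * (gk * s * gk⁻¹)) * gk := h2
      _ = ((gk⁻¹ * gl) * s * (gk⁻¹ * gl)⁻¹) * s := by group
  have key := hyp (gk⁻¹ * gl) h1 (by rw [e]; exact hγ)
  convert key using 2
  exact Subtype.ext e.symm
end

section
/- In the Mathieu group M₁₁ (the subgroup of S₁₁ generated by (1 2 3 4 5 6 7 8 9 10 11) and (3 7 11 8)(4 10 5 6)), the element s = (1 3 11 6 7 10 4 5)(8 9) has order 8, its centralizer in M₁₁ is the cyclic group generated by s, and s³ is conjugate to s in M₁₁. -/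
set_option maxRecDepth 40000

/-- The Mathieu group `M₁₁ ≤ S₁₁` (points `1,…,11` encoded as `0,…,10`). -/
def M11 : Subgroup (Equiv.Perm (Fin 11)) :=
  Subgroup.closure {c[0, 1, 2, 3, 4, 5, 6, 7, 8, 9, 10], c[2, 6, 10, 7] * c[3, 9, 4, 5]}

private def aa : Equiv.Perm (Fin 11) := c[0, 1, 2, 3, 4, 5, 6, 7, 8, 9, 10]
private def bb : Equiv.Perm (Fin 11) := c[2, 6, 10, 7] * c[3, 9, 4, 5]
private def ss : Equiv.Perm (Fin 11) := c[0, 2, 10, 5, 6, 9, 3, 4] * c[7, 8]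
private def tt : Equiv.Perm (Fin 11) := c[7, 8]

private lemma haM : aa ∈ M11 :=
  Subgroup.subset_closure (by left; rfl)

private lemma hbM : bb ∈ M11 :=
  Subgroup.subset_closure (by right; rfl)

private lemma hsM : ss ∈ M11 := by
  have h : ss = bb*bb*aa⁻¹*bb⁻¹*aa⁻¹*bb⁻¹*aa*bb := by decide
  rw [h]
  exact mul_mem (mul_mem (mul_mem (mul_mem (mul_mem (mul_mem (mul_mem hbM hbM)
    (inv_mem haM)) (inv_mem hbM)) (inv_mem haM)) (inv_mem hbM)) haM) hbM

private lemma hMsign : M11 ≤ (Equiv.Perm.sign (α := Fin 11)).ker := by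
  rw [M11, Subgroup.closure_le]
  rintro x (rfl | rfl)
  · exact (by decide : Equiv.Perm.sign aa = 1)
  · exact (by decide : Equiv.Perm.sign bb = 1)

/-- `s = (1 3 11 6 7 10 4 5)(8 9)` has order 8, its centralizer in `M₁₁` is `⟨s⟩`,
and `s³` is conjugate to `s` in `M₁₁`. -/
theorem stmt6 :
    (c[0, 2, 10, 5, 6, 9, 3, 4] * c[7, 8] : Equiv.Perm (Fin 11)) ∈ M11 ∧
    orderOf (c[0, 2, 10, 5, 6, 9, 3, 4] * c[7, 8] : Equiv.Perm (Fin 11)) = 8 ∧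
    Subgroup.centralizer {(c[0, 2, 10, 5, 6, 9, 3, 4] * c[7, 8] : Equiv.Perm (Fin 11))} ⊓ M11 =
      Subgroup.zpowers (c[0, 2, 10, 5, 6, 9, 3, 4] * c[7, 8] : Equiv.Perm (Fin 11)) ∧
    ∃ g ∈ M11, g * (c[0, 2, 10, 5, 6, 9, 3, 4] * c[7, 8]) * g⁻¹ =
      (c[0, 2, 10, 5, 6, 9, 3, 4] * c[7, 8] : Equiv.Perm (Fin 11)) ^ 3 := by
  have hss : (c[0, 2, 10, 5, 6, 9, 3, 4] * c[7, 8] : Equiv.Perm (Fin 11)) = ss := rfl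
  rw [hss]
  refine ⟨hsM, ?_, ?_, ?_⟩
  · -- order 8
    rw [orderOf_eq_iff (by norm_num)]
    refine ⟨by decide, ?_⟩
    intro m hm hm'
    interval_cases m <;> decide
  · -- centralizer
    apply le_antisymm
    · intro g hg
      rw [Subgroup.mem_inf] at hg
      obtain ⟨hg1, hg2⟩ := hg
      rw [Subgroup.mem_centralizer_iff] at hg1
      have hc : ss * g = g * ss := hg1 ss rfl
      have hcomm : ∀ x, g (ss x) = ss (g x) := by
        intro x
        have := congrArg (fun p => p x) hc
        simpa [Equiv.Perm.mul_apply] using this.symm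
      have hpow : ∀ (n : ℕ) (x), g ((ss ^ n) x) = (ss ^ n) (g x) := by
        intro n
        induction n with
        | zero => simp
        | succ n ih =>
          intro x
          rw [pow_succ, Equiv.Perm.mul_apply, Equiv.Perm.mul_apply, ih, hcomm]
      have hsp : ∀ (n : ℕ) (x), ss ((ss ^ n) x) = (ss ^ n) (ss x) := by
        intro n x
        rw [← Equiv.Perm.mul_apply, ← Equiv.Perm.mul_apply, ← pow_succ', ← pow_succ]
      have hsig : Equiv.Perm.sign g = 1 := hMsign hg2
      -- g fixes 1
      have hg1fix : g 1 = 1 := by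
        have h1 : ss (g 1) = g 1 := by
          rw [← hcomm, (by decide : ss (1 : Fin 11) = 1)]
        exact (by decide : ∀ y : Fin 11, ss y = y → y = 1) _ h1
      have hfix1 : ∀ n : ℕ, (ss ^ n) (1 : Fin 11) = 1 := by
        intro n
        induction n with
        | zero => rfl
        | succ n ih =>
          rw [pow_succ, Equiv.Perm.mul_apply, (by decide : ss (1 : Fin 11) = 1), ih]
      -- g 0 is in the 8-cycle orbit
      have hg0 : ∃ m : Fin 8, g 0 = (ss ^ (m : ℕ)) 0 := by
        have h1 : ss (g 0) ≠ g 0 := by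
          rw [← hcomm, (by decide : ss (0 : Fin 11) = 2)]
          exact fun h => (by decide : (2 : Fin 11) ≠ 0) (g.injective h)
        have h2 : (ss ^ 2) (g 0) ≠ g 0 := by
          rw [← hpow, (by decide : (ss ^ 2) (0 : Fin 11) = 10)]
          exact fun h => (by decide : (10 : Fin 11) ≠ 0) (g.injective h)
        exact (by decide : ∀ y : Fin 11, ss y ≠ y → (ss ^ 2) y ≠ y →
          ∃ m : Fin 8, y = (ss ^ (m : ℕ)) 0) _ h1 h2
      obtain ⟨m, hm⟩ := hg0
      -- g 7 ∈ {7, 8}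
      have hg7 : g 7 = 7 ∨ g 7 = 8 := by
        have h1 : (ss ^ 2) (g 7) = g 7 := by
          rw [← hpow, (by decide : (ss ^ 2) (7 : Fin 11) = 7)]
        have h2 : g 7 ≠ 1 := fun h => (by decide : (7 : Fin 11) ≠ 1)
          (g.injective (h.trans hg1fix.symm))
        exact (by decide : ∀ y : Fin 11, (ss ^ 2) y = y → y ≠ 1 → y = 7 ∨ y = 8) _ h1 h2
      have horb : ∀ x : Fin 11, x = 1 ∨ x = 7 ∨ x = 8 ∨
          ∃ k : Fin 8, x = (ss ^ (k : ℕ)) 0 := by decide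
      have htfix : ∀ x : Fin 11, x ≠ 7 → x ≠ 8 → tt x = x := by decide
      have h0ne : ∀ k : Fin 8, (ss ^ (k : ℕ)) (0 : Fin 11) ≠ 7 ∧
          (ss ^ (k : ℕ)) (0 : Fin 11) ≠ 8 := by decide
      have hcore : ∀ x : Fin 11, x ≠ 7 → x ≠ 8 → g x = (ss ^ (m : ℕ)) x := by
        intro x h7 h8
        rcases horb x with rfl | rfl | rfl | ⟨k, rfl⟩
        · rw [hg1fix, hfix1]
        · exact absurd rfl h7
        · exact absurd rfl h8
        · rw [hpow, hm, ← Equiv.Perm.mul_apply, ← Equiv.Perm.mul_apply, pow_mul_comm]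
      have h8of7 : ∀ y : Fin 11, g 7 = y → g 8 = ss y := by
        intro y hy
        rw [(by decide : (8 : Fin 11) = ss 7), hcomm, hy]
      have hm78 : ((ss ^ (m : ℕ)) (7 : Fin 11) = 7 ∧ (ss ^ (m : ℕ)) (8 : Fin 11) = 8) ∨
          ((ss ^ (m : ℕ)) (7 : Fin 11) = 8 ∧ (ss ^ (m : ℕ)) (8 : Fin 11) = 7) :=
        (by decide : ∀ m : Fin 8,
          ((ss ^ (m : ℕ)) (7 : Fin 11) = 7 ∧ (ss ^ (m : ℕ)) (8 : Fin 11) = 8) ∨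
          ((ss ^ (m : ℕ)) (7 : Fin 11) = 8 ∧ (ss ^ (m : ℕ)) (8 : Fin 11) = 7)) m
      have key : g = ss ^ (m : ℕ) ∨ g = ss ^ (m : ℕ) * tt := by
        by_cases hcase : g 7 = (ss ^ (m : ℕ)) 7
        · left
          refine Equiv.ext fun x => ?_
          rcases horb x with rfl | rfl | rfl | ⟨k, rfl⟩
          · exact hcore 1 (by decide) (by decide)
          · exact hcase
          · rw [h8of7 _ hcase, hsp, (by decide : ss (7 : Fin 11) = 8)]
          · exact hcore _ (h0ne k).1 (h0ne k).2
        · right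
          have g7eq : g 7 = (ss ^ (m : ℕ)) 8 := by
            rcases hm78 with ⟨h7, h8⟩ | ⟨h7, h8⟩
            · rw [h8]
              rcases hg7 with h | h
              · exact absurd (h.trans h7.symm) hcase
              · exact h
            · rw [h8]
              rcases hg7 with h | h
              · exact h
              · exact absurd (h.trans h7.symm) hcase
          refine Equiv.ext fun x => ?_
          simp only [Equiv.Perm.mul_apply]
          rcases horb x with rfl | rfl | rfl | ⟨k, rfl⟩
          · rw [(by decide : tt (1 : Fin 11) = 1)]
            exact hcore 1 (by decide) (by decide)
          · rw [(by decide : tt (7 : Fin 11) = 8)]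
            exact g7eq
          · rw [(by decide : tt (8 : Fin 11) = 7), h8of7 _ g7eq, hsp,
              (by decide : ss (8 : Fin 11) = 7)]
          · rw [htfix _ (h0ne k).1 (h0ne k).2]
            exact hcore _ (h0ne k).1 (h0ne k).2
      rcases key with rfl | rfl
      · exact Subgroup.pow_mem _ (Subgroup.mem_zpowers ss) _
      · exfalso
        rw [map_mul, map_pow, (by decide : Equiv.Perm.sign ss = 1),
          (by decide : Equiv.Perm.sign tt = -1)] at hsig
        simp at hsig
    · intro g hg
      obtain ⟨k, rfl⟩ := Subgroup.mem_zpowers_iff.mp hg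
      rw [Subgroup.mem_inf]
      refine ⟨Subgroup.mem_centralizer_iff.mpr ?_, Subgroup.zpow_mem M11 hsM k⟩
      rintro h rfl
      exact (Commute.refl ss).zpow_right k
  · -- conjugacy
    refine ⟨aa*bb*bb*aa⁻¹, mul_mem (mul_mem (mul_mem haM hbM) hbM) (inv_mem haM), ?_⟩
    decide
end

section
/- In the Mathieu group M₁₂, the element s = (1 2 7 10 5 6 8 12 9 4)(3 11) has order 10, its centralizer in M₁₂ is the cyclic group of order 10 generated by s, s is conjugate to s⁻¹, and the intersection of the conjugacy class of s with its centralizer equals {s, s³, s⁷, s⁹}. -/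
/-- The Mathieu group `M₁₂ ≤ S₁₂` (points `1,…,12` encoded as `0,…,11`). -/
def M12 : Subgroup (Equiv.Perm (Fin 12)) :=
  Subgroup.closure
    {c[0, 1, 2, 3, 4, 5, 6, 7, 8, 9, 10], c[2, 6, 10, 7] * c[3, 9, 4, 5],
     c[0, 11] * c[1, 10] * c[2, 5] * c[3, 7] * c[4, 8] * c[6, 9]}

/-- `s = (1 2 7 10 5 6 8 12 9 4)(3 11)`. -/
def s13 : Equiv.Perm (Fin 12) := c[0, 1, 6, 9, 4, 5, 7, 11, 8, 3] * c[2, 10]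

set_option maxRecDepth 5000

def ga : Equiv.Perm (Fin 12) := c[0, 1, 2, 3, 4, 5, 6, 7, 8, 9, 10]
def gb : Equiv.Perm (Fin 12) := c[2, 6, 10, 7] * c[3, 9, 4, 5]
def gc : Equiv.Perm (Fin 12) :=
  c[0, 11] * c[1, 10] * c[2, 5] * c[3, 7] * c[4, 8] * c[6, 9]
def tau : Equiv.Perm (Fin 12) := c[2, 10]

lemma ga_mem : ga ∈ M12 := Subgroup.subset_closure (by left; rfl)
lemma gb_mem : gb ∈ M12 := Subgroup.subset_closure (by right; left; rfl)
lemma gc_mem : gc ∈ M12 := Subgroup.subset_closure (by right; right; rfl)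

lemma s13_eq : s13 = gb * gb * ga⁻¹ * ga⁻¹ * ga⁻¹ * gc * ga * gb * ga⁻¹ := by decide

lemma s13_mem : s13 ∈ M12 := by
  rw [s13_eq]
  exact mul_mem (mul_mem (mul_mem (mul_mem (mul_mem (mul_mem (mul_mem (mul_mem
    gb_mem gb_mem) (inv_mem ga_mem)) (inv_mem ga_mem)) (inv_mem ga_mem)) gc_mem)
    ga_mem) gb_mem) (inv_mem ga_mem)

def g3 : Equiv.Perm (Fin 12) := gc * ga * gb * ga * gb⁻¹ * ga * gb

lemma g3_mem : g3 ∈ M12 :=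
  mul_mem (mul_mem (mul_mem (mul_mem (mul_mem (mul_mem gc_mem ga_mem) gb_mem)
    ga_mem) (inv_mem gb_mem)) ga_mem) gb_mem

lemma g3_conj : g3 * s13 * g3⁻¹ = s13 ^ 3 := by decide

lemma M12_le_alt : M12 ≤ alternatingGroup (Fin 12) := by
  rw [M12]
  refine (Subgroup.closure_le _).mpr ?_
  intro x hx
  rcases hx with rfl | rfl | rfl <;>
    · show _ ∈ alternatingGroup (Fin 12)
      rw [Equiv.Perm.mem_alternatingGroup]
      decide

lemma tau_not_mem : tau ∉ M12 := fun h =>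
  absurd (Equiv.Perm.mem_alternatingGroup.mp (M12_le_alt h)) (by decide)

lemma order_s13 : orderOf s13 = 10 := by
  rw [orderOf_eq_iff (by norm_num)]
  exact ⟨by decide, by decide⟩

lemma comm_apply {g : Equiv.Perm (Fin 12)} (hc : Commute g s13) (m : ℕ)
    (x : Fin 12) : g ((s13 ^ m) x) = (s13 ^ m) (g x) := by
  have h := hc.pow_right m
  rw [← Equiv.Perm.mul_apply, h, Equiv.Perm.mul_apply]

lemma uniq {g h : Equiv.Perm (Fin 12)} (hcg : Commute g s13) (hch : Commute h s13)
    (h0 : g 0 = h 0) (h2 : g 2 = h 2) : g = h := by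
  refine Equiv.ext fun x => ?_
  rcases (by decide : ∀ y : Fin 12, y = 2 ∨ y = 10 ∨ ∃ m < 10, (s13 ^ m) 0 = y) x
    with rfl | rfl | ⟨m, _, rfl⟩
  · exact h2
  · have e : s13 (2 : Fin 12) = 10 := by decide
    calc g 10 = g (s13 2) := by rw [e]
      _ = s13 (g 2) := by simpa using comm_apply hcg 1 2
      _ = s13 (h 2) := by rw [h2]
      _ = h (s13 2) := by simpa using (comm_apply hch 1 2).symm
      _ = h 10 := by rw [e]
  · rw [comm_apply hcg m 0, comm_apply hch m 0, h0]

lemma key {g : Equiv.Perm (Fin 12)} (hc : Commute g s13) :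
    ∃ k < 10, g = s13 ^ k ∨ g = s13 ^ k * tau := by
  -- g 2 is a fixed point of s13 ^ 2
  have hg2 : (s13 ^ 2) (g 2) = g 2 := by
    rw [← comm_apply hc 2 2]
    norm_num [(by decide : (s13 ^ 2) (2 : Fin 12) = 2)]
  have hg2' : g 2 = 2 ∨ g 2 = 10 :=
    (by decide : ∀ y : Fin 12, (s13 ^ 2) y = y → y = 2 ∨ y = 10) _ hg2
  -- g 0 is not a fixed point of s13 ^ 2
  have hg0 : (s13 ^ 2) (g 0) ≠ g 0 := by
    rw [← comm_apply hc 2 0]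
    intro h
    exact (by decide : (s13 ^ 2) (0 : Fin 12) ≠ 0) (g.injective h)
  have hg0' : g 0 ≠ 2 ∧ g 0 ≠ 10 := by
    constructor <;> intro h <;> rw [h] at hg0 <;> exact hg0 (by decide)
  obtain ⟨k, hk10, hk⟩ :=
    (by decide : ∀ y : Fin 12, y ≠ 2 → y ≠ 10 → ∃ k < 10, (s13 ^ k) 0 = y)
      _ hg0'.1 hg0'.2
  refine ⟨k, hk10, ?_⟩
  have hck : Commute (s13 ^ k) s13 := (Commute.refl s13).pow_left k
  by_cases h2 : g 2 = (s13 ^ k) 2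
  · exact Or.inl (uniq hc hck (hk.symm) h2)
  · right
    have hpair := (by decide : ∀ k < 10, ((s13 ^ k) (2 : Fin 12) = 2 ∧
      (s13 ^ k) (10 : Fin 12) = 10) ∨ ((s13 ^ k) (2 : Fin 12) = 10 ∧
      (s13 ^ k) (10 : Fin 12) = 2)) k hk10
    have hctau : Commute (s13 ^ k * tau) s13 :=
      hck.mul_left (by decide : tau * s13 = s13 * tau)
    refine uniq hc hctau ?_ ?_
    · rw [Equiv.Perm.mul_apply, (by decide : tau (0 : Fin 12) = 0), hk]
    · rw [Equiv.Perm.mul_apply, (by decide : tau (2 : Fin 12) = 10)]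
      rcases hpair with ⟨ha, hb⟩ | ⟨ha, hb⟩ <;> rw [hb] <;>
        rcases hg2' with h | h <;> rw [h] <;> first
          | rfl
          | (exfalso; apply h2; rw [h, ha])

lemma s13_pow10 : s13 ^ 10 = 1 := by decide

lemma conj9 : g3 ^ 2 * s13 * (g3 ^ 2)⁻¹ = s13 ^ 9 := by
  calc g3 ^ 2 * s13 * (g3 ^ 2)⁻¹ = g3 * (g3 * s13 * g3⁻¹) * g3⁻¹ := by
        rw [pow_two, mul_inv_rev]
        simp only [mul_assoc]
    _ = g3 * s13 ^ 3 * g3⁻¹ := by rw [g3_conj]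
    _ = (g3 * s13 * g3⁻¹) ^ 3 := by rw [conj_pow]
    _ = (s13 ^ 3) ^ 3 := by rw [g3_conj]
    _ = s13 ^ 9 := by rw [← pow_mul]

lemma conj7 : g3 ^ 3 * s13 * (g3 ^ 3)⁻¹ = s13 ^ 7 := by
  calc g3 ^ 3 * s13 * (g3 ^ 3)⁻¹ = g3 * (g3 ^ 2 * s13 * (g3 ^ 2)⁻¹) * g3⁻¹ := by
        rw [pow_succ', mul_inv_rev]
        simp only [mul_assoc]
    _ = g3 * s13 ^ 9 * g3⁻¹ := by rw [conj9]
    _ = (g3 * s13 * g3⁻¹) ^ 9 := by rw [conj_pow]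
    _ = (s13 ^ 3) ^ 9 := by rw [g3_conj]
    _ = (s13 ^ 10) ^ 2 * s13 ^ 7 := by
        rw [← pow_mul, ← pow_mul, ← pow_add]
    _ = s13 ^ 7 := by rw [s13_pow10]; group

lemma s13_inv : s13⁻¹ = s13 ^ 9 := by decide

lemma pow_k_mem_set : ∀ k < 10, (s13 ^ k) ^ 2 ≠ 1 → (s13 ^ k) ^ 5 ≠ 1 →
    (s13 ^ k = s13 ∨ s13 ^ k = s13 ^ 3 ∨ s13 ^ k = s13 ^ 7 ∨ s13 ^ k = s13 ^ 9) := by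
  have he : ∀ m : ℕ, (s13 ^ (2 * m)) ^ 5 = 1 := fun m => by
    rw [← pow_mul, show 2 * m * 5 = 10 * m by ring, pow_mul, s13_pow10, one_pow]
  intro k hk h2 h5
  interval_cases k
  · exact absurd (he 0) h5
  · exact Or.inl (pow_one s13)
  · exact absurd (he 1) h5
  · exact Or.inr (Or.inl rfl)
  · exact absurd (he 2) h5
  · exact absurd (by rw [← pow_mul]; exact s13_pow10) h2
  · exact absurd (he 3) h5
  · exact Or.inr (Or.inr (Or.inl rfl))
  · exact absurd (he 4) h5
  · exact Or.inr (Or.inr (Or.inr rfl))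

/-- `s` has order 10, its centralizer in `M₁₂` is `⟨s⟩` of order 10, `s` is conjugate
to `s⁻¹` in `M₁₂`, and `𝒪_s ∩ M₁₂^s = {s, s³, s⁷, s⁹}`. -/
theorem stmt17 :
    s13 ∈ M12 ∧ orderOf s13 = 10 ∧
    Subgroup.centralizer {s13} ⊓ M12 = Subgroup.zpowers s13 ∧
    (∃ g ∈ M12, g * s13 * g⁻¹ = s13⁻¹) ∧
    {t : Equiv.Perm (Fin 12) | (∃ g ∈ M12, g * s13 * g⁻¹ = t) ∧
      t ∈ Subgroup.centralizer {s13}} = {s13, s13 ^ 3, s13 ^ 7, s13 ^ 9} := by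
  refine ⟨s13_mem, order_s13, ?_, ?_, ?_⟩
  · apply le_antisymm
    · rintro g hg
      rw [Subgroup.mem_inf] at hg
      obtain ⟨hc, hM⟩ := hg
      have hcom : Commute g s13 := Subgroup.mem_centralizer_singleton_iff.mp hc
      obtain ⟨k, -, h | h⟩ := key hcom
      · rw [h]; exact Subgroup.pow_mem _ (Subgroup.mem_zpowers s13) k
      · exfalso
        apply tau_not_mem
        have ht : tau = (s13 ^ k)⁻¹ * g := by rw [h]; group
        rw [ht]
        exact mul_mem (inv_mem (Subgroup.pow_mem _ s13_mem k)) hM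
    · intro g hg
      obtain ⟨n, rfl⟩ := hg
      rw [Subgroup.mem_inf]
      exact ⟨Subgroup.mem_centralizer_singleton_iff.mpr
        ((Commute.refl s13).zpow_left n).eq, Subgroup.zpow_mem _ s13_mem n⟩
  · exact ⟨g3 ^ 2, pow_mem g3_mem 2, by rw [conj9, s13_inv]⟩
  · ext t
    simp only [Set.mem_setOf_eq, Set.mem_insert_iff, Set.mem_singleton_iff]
    constructor
    · rintro ⟨⟨g, hgM, rfl⟩, hcent⟩
      have htM : g * s13 * g⁻¹ ∈ M12 := mul_mem (mul_mem hgM s13_mem) (inv_mem hgM)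
      have hcom : Commute (g * s13 * g⁻¹) s13 :=
        Subgroup.mem_centralizer_singleton_iff.mp hcent
      obtain ⟨k, hk10, h | h⟩ := key hcom
      · have h2 : (s13 ^ k) ^ 2 ≠ 1 := by
          rw [← h]
          intro hh
          rw [conj_pow, conj_eq_one_iff] at hh
          exact (by decide : s13 ^ 2 ≠ 1) hh
        have h5 : (s13 ^ k) ^ 5 ≠ 1 := by
          rw [← h]
          intro hh
          rw [conj_pow, conj_eq_one_iff] at hh
          exact (by decide : s13 ^ 5 ≠ 1) hh
        rw [h]
        exact pow_k_mem_set k hk10 h2 h5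
      · exfalso
        apply tau_not_mem
        have ht : tau = (s13 ^ k)⁻¹ * (g * s13 * g⁻¹) := by rw [h]; group
        rw [ht]
        exact mul_mem (inv_mem (Subgroup.pow_mem _ s13_mem k)) htM
    · have hcent : ∀ m : ℕ, s13 ^ m ∈ Subgroup.centralizer {s13} :=
        fun m => Subgroup.mem_centralizer_singleton_iff.mpr
          ((Commute.refl s13).pow_left m).eq
      rintro (rfl | rfl | rfl | rfl)
      · exact ⟨⟨1, one_mem _, by group⟩, by
          simpa using hcent 1⟩
      · exact ⟨⟨g3, g3_mem, g3_conj⟩, hcent 3⟩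
      · exact ⟨⟨g3 ^ 3, pow_mem g3_mem 3, conj7⟩, hcent 7⟩
      · exact ⟨⟨g3 ^ 2, pow_mem g3_mem 2, conj9⟩, hcent 9⟩
end
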